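/- Let ℓ ≥ r ≥ 3 be integers and set η = 1/(10⁵·ℓ³·(3r−4)³). Let G be a K_r-maximal, K_{ℓ+1}-free graph on n ≥ 2ℓ vertices which is ℓ-partite with vertex classes V₁,…,V_ℓ and has minimum degree δ(G) ≥ ((ℓ−1)/ℓ − η)·n. Then G is complete ℓ-partite, i.e. every pair of vertices lying in distinct classes is adjacent. -/

import Mathlib

open Finset

/-- The number of copies of `K_r` in `G`, i.e. the number of `r`-cliques of `G`. -/
noncomputable def cliqueCount {V : Type*} (G : SimpleGraph V) (r : ℕ) : ℕ :=
  {s : Finset V | G.IsNClique r s}.ncard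

/-- `G` is `K_r`-maximal, `K_{ℓ+1}`-free: `G` is `K_{ℓ+1}`-free and every supergraph of `G`
(on the same vertex set) containing strictly more copies of `K_r` contains a `K_{ℓ+1}`. -/
def KrMaxKlFree {V : Type*} (r ℓ : ℕ) (G : SimpleGraph V) : Prop :=
  G.CliqueFree (ℓ + 1) ∧
    ∀ G' : SimpleGraph V, G ≤ G' → cliqueCount G r < cliqueCount G' r →
      ¬ G'.CliqueFree (ℓ + 1)

/-- cf. Claim 3.5: a `K_r`-maximal, `K_{ℓ+1}`-free, `ℓ`-partite graph of
large minimum degree is complete `ℓ`-partite. -/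
theorem krMaximal_partite_complete
    (ℓ r : ℕ) (hr : 3 ≤ r) (hℓr : r ≤ ℓ) (η : ℝ)
    (hη : η = 1 / (10 ^ 5 * (ℓ : ℝ) ^ 3 * (3 * (r : ℝ) - 4) ^ 3))
    (n : ℕ) (hn : 2 * ℓ ≤ n)
    (G : SimpleGraph (Fin n)) (hmax : KrMaxKlFree r ℓ G)
    (P : Fin ℓ → Finset (Fin n))
    (hdisj : ∀ i j, i ≠ j → Disjoint (P i) (P j))
    (hcover : ∀ x : Fin n, ∃ i, x ∈ P i)
    (hpart : ∀ i, ∀ u ∈ P i, ∀ v ∈ P i, ¬ G.Adj u v)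
    (hdeg : ∀ v : Fin n,
      (((ℓ : ℝ) - 1) / (ℓ : ℝ) - η) * (n : ℝ) ≤ ({w | G.Adj v w}.ncard : ℝ)) :
    ∀ i j, i ≠ j → ∀ u ∈ P i, ∀ v ∈ P j, G.Adj u v := by
  classical
  intro i j hij u hu v hv
  by_contra hadj
  obtain ⟨hfree, hmaxAdd⟩ := hmax
  have hℓ3 : 3 ≤ ℓ := le_trans hr hℓr
  have hn0 : 0 < n := by omega
  have hL : (3:ℝ) ≤ (ℓ:ℝ) := by exact_mod_cast hℓ3
  have hR : (3:ℝ) ≤ (r:ℝ) := by exact_mod_cast hr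
  have hRL : (r:ℝ) ≤ (ℓ:ℝ) := by exact_mod_cast hℓr
  have hL0 : (0:ℝ) < (ℓ:ℝ) := by linarith
  have hnR : (0:ℝ) < (n:ℝ) := by exact_mod_cast hn0
  set L : ℝ := (ℓ:ℝ) with hLdef
  set D : ℝ := 10 ^ 5 * L ^ 3 * (3 * (r:ℝ) - 4) ^ 3 with hDdef
  have h3r4 : (0:ℝ) < 3 * (r:ℝ) - 4 := by linarith
  have hD0 : (0:ℝ) < D := by
    apply mul_pos (mul_pos (by norm_num) (pow_pos hL0 3)) (pow_pos h3r4 3)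
  have hηpos : 0 < η := by rw [hη]; exact one_div_pos.mpr hD0
  have hD2 : 12500000 * L ^ 3 ≤ D := by
    have h5 : (5:ℝ) ^ 3 ≤ (3 * (r:ℝ) - 4) ^ 3 := by
      apply pow_le_pow_left₀ (by norm_num) (by linarith)
    have hL3 : (0:ℝ) < L ^ 3 := pow_pos hL0 3
    nlinarith [mul_le_mul_of_nonneg_left h5 (le_of_lt (mul_pos (show (0:ℝ) < 10^5 by norm_num) hL3))]
  have hkey : ((r:ℝ) - 1) * (1 / L + η) < 1 := by
    rw [hη]
    have heq : ((r:ℝ) - 1) * (1 / L + 1 / D) = (((r:ℝ) - 1) * (D + L)) / (L * D) := by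
      field_simp
      try ring
    rw [heq, div_lt_one (mul_pos hL0 hD0)]
    have h1 : ((r:ℝ) - 1) * (D + L) ≤ (L - 1) * (D + L) := by
      apply mul_le_mul_of_nonneg_right (by linarith) (by linarith)
    nlinarith [hD2, mul_pos (mul_pos hL0 hL0) hL0, sq_nonneg L]
  -- class uniqueness
  have hclass : ∀ x a b, x ∈ P a → x ∈ P b → a = b := by
    intro x a b ha hb
    by_contra h
    exact (Finset.disjoint_left.mp (hdisj a b h) ha) hb
  have huv : u ≠ v := by
    intro h
    exact (Finset.disjoint_left.mp (hdisj i j hij) hu) (h ▸ hv)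
  -- non-neighborhoods
  set N : Fin n → Finset (Fin n) := fun x => univ.filter (fun y => ¬ G.Adj x y) with hNdef
  have hNcard : ∀ x, ((N x).card : ℝ) ≤ (1 / L + η) * n := by
    intro x
    have hsplit : (univ.filter (fun y => G.Adj x y)).card + (N x).card = n := by
      rw [hNdef]
      simpa using Finset.card_filter_add_card_filter_not
        (s := (univ : Finset (Fin n))) (p := fun y => G.Adj x y)
    have hset : {w | G.Adj x w} = ↑(univ.filter (fun y => G.Adj x y)) := by
      ext w; simp
    have hdx := hdeg x
    rw [hset, Set.ncard_coe_finset] at hdx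
    have hrw : ((L:ℝ) - 1) / L - η = 1 - (1 / L + η) := by
      field_simp
      ring
    rw [hLdef] at hdx  -- no-op but keep names aligned
    rw [hrw] at hdx
    have hs : ((univ.filter (fun y => G.Adj x y)).card : ℝ) + ((N x).card : ℝ) = n := by
      exact_mod_cast hsplit
    nlinarith [hdx, hs]
  have hNself : ∀ x, x ∈ N x := by
    intro x; simp [hNdef]
  -- greedy common neighbor
  have hunion : ∀ S : Finset (Fin n), (S.card : ℝ) ≤ (r:ℝ) - 1 → ∃ z, ∀ x ∈ S, G.Adj x z := by
    intro S hS
    have hsum : ((S.biUnion N).card : ℝ) < n := by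
      have h1 : ((S.biUnion N).card : ℝ) ≤ ∑ x ∈ S, ((N x).card : ℝ) := by
        exact_mod_cast Finset.card_biUnion_le
      have h2 : ∑ x ∈ S, ((N x).card : ℝ) ≤ (S.card : ℝ) * ((1 / L + η) * n) := by
        have := Finset.sum_le_card_nsmul S (fun x => ((N x).card : ℝ)) ((1 / L + η) * n)
          (fun x _ => hNcard x)
        simpa [nsmul_eq_mul] using this
      have h3 : (S.card : ℝ) * ((1 / L + η) * n) ≤ ((r:ℝ) - 1) * ((1 / L + η) * n) := by
        apply mul_le_mul_of_nonneg_right hS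
        positivity
      nlinarith [mul_pos (sub_pos.mpr hkey) hnR]
    have hlt : (S.biUnion N).card < Finset.univ.card (α := Fin n) := by
      have : ((S.biUnion N).card : ℝ) < ((Finset.univ.card (α := Fin n)) : ℝ) := by
        simpa using hsum
      exact_mod_cast this
    obtain ⟨z, hz⟩ : ∃ z, z ∉ S.biUnion N := by
      by_contra h
      push_neg at h
      rw [Finset.eq_univ_of_forall h] at hlt
      exact lt_irrefl _ hlt
    refine ⟨z, fun x hx => ?_⟩
    by_contra hzx
    exact hz (Finset.mem_biUnion.mpr ⟨x, hx, by simp [hNdef, hzx]⟩)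
  have greedy : ∀ k, k ≤ r - 2 → ∃ T : Finset (Fin n), T.card = k ∧ u ∉ T ∧ v ∉ T ∧
      (∀ x ∈ T, G.Adj u x) ∧ (∀ x ∈ T, G.Adj v x) ∧
      (∀ x ∈ T, ∀ y ∈ T, x ≠ y → G.Adj x y) := by
    intro k
    induction k with
    | zero => intro _; exact ⟨∅, by simp⟩
    | succ k ih =>
      intro hk
      obtain ⟨T, hTc, huT, hvT, hAu, hAv, hT⟩ := ih (by omega)
      have hcard2 : (insert u (insert v T)).card ≤ k + 2 := by
        calc (insert u (insert v T)).card ≤ (insert v T).card + 1 := Finset.card_insert_le _ _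
          _ ≤ T.card + 1 + 1 := by
              exact Nat.succ_le_succ (Finset.card_insert_le _ _)
          _ = k + 2 := by omega
      obtain ⟨z, hz⟩ := hunion (insert u (insert v T)) (by
        have : ((insert u (insert v T)).card : ℝ) ≤ (k:ℝ) + 2 := by exact_mod_cast hcard2
        have hk' : (k:ℝ) + 2 ≤ (r:ℝ) - 1 := by
          have : k + 3 ≤ r := by omega
          have := (Nat.cast_le (α := ℝ)).mpr this
          push_cast at this
          linarith
        linarith)
      have hzu : G.Adj u z := hz u (by simp)
      have hzv : G.Adj v z := hz v (by simp)
      have hzT : ∀ x ∈ T, G.Adj x z := fun x hx => hz x (by simp [hx])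
      have hzTn : z ∉ T := fun h => G.irrefl (hzT z h)
      refine ⟨insert z T, ?_, ?_, ?_, ?_, ?_, ?_⟩
      · rw [Finset.card_insert_of_notMem hzTn, hTc]
      · intro h
        rcases Finset.mem_insert.mp h with h | h
        · exact G.ne_of_adj hzu h
        · exact huT h
      · intro h
        rcases Finset.mem_insert.mp h with h | h
        · exact G.ne_of_adj hzv h
        · exact hvT h
      · intro x hx
        rcases Finset.mem_insert.mp hx with rfl | hx
        · exact hzu
        · exact hAu x hx
      · intro x hx
        rcases Finset.mem_insert.mp hx with rfl | hx
        · exact hzv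
        · exact hAv x hx
      · intro x hx y hy hxy
        rcases Finset.mem_insert.mp hx with hx' | hx'
        · subst hx'
          rcases Finset.mem_insert.mp hy with hy' | hy'
          · exact absurd hy'.symm hxy
          · exact (hzT y hy').symm
        · rcases Finset.mem_insert.mp hy with hy' | hy'
          · subst hy'
            exact hzT x hx'
          · exact hT x hx' y hy' hxy
  obtain ⟨T, hTc, huT, hvT, hAu, hAv, hT⟩ := greedy (r - 2) le_rfl
  set S : Finset (Fin n) := insert u (insert v T) with hSdef
  have huvT : u ∉ insert v T := by
    intro h
    rcases Finset.mem_insert.mp h with h | h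
    · exact huv h
    · exact huT h
  have hScard : S.card = r := by
    rw [hSdef, Finset.card_insert_of_notMem huvT, Finset.card_insert_of_notMem hvT, hTc]
    omega
  -- the augmented graph
  set G' : SimpleGraph (Fin n) :=
    { Adj := fun a b => G.Adj a b ∨ (a = u ∧ b = v) ∨ (a = v ∧ b = u)
      symm := by
        constructor
        intro a b h
        rcases h with h | ⟨rfl, rfl⟩ | ⟨rfl, rfl⟩
        · exact Or.inl h.symm
        · exact Or.inr (Or.inr ⟨rfl, rfl⟩)
        · exact Or.inr (Or.inl ⟨rfl, rfl⟩)
      loopless := by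
        constructor
        intro a h
        rcases h with h | ⟨rfl, h2⟩ | ⟨rfl, h2⟩
        · exact G.irrefl h
        · exact huv h2
        · exact huv h2.symm } with hG'def
  have hGle : G ≤ G' := fun {a b} h => Or.inl h
  have hG'adj : ∀ a b, G'.Adj a b ↔ G.Adj a b ∨ (a = u ∧ b = v) ∨ (a = v ∧ b = u) :=
    fun a b => Iff.rfl
  -- G' is still ℓ-partite
  have hpart' : ∀ c, ∀ a ∈ P c, ∀ b ∈ P c, ¬ G'.Adj a b := by
    intro c a ha b hb hab
    rcases (hG'adj a b).1 hab with h | ⟨h1, h2⟩ | ⟨h1, h2⟩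
    · exact hpart c a ha b hb h
    · exact hij ((hclass u i c hu (h1 ▸ ha)).trans (hclass v c j (h2 ▸ hb) hv))
    · exact hij ((hclass u i c hu (h2 ▸ hb)).trans (hclass v c j (h1 ▸ ha) hv))
  have hfree' : G'.CliqueFree (ℓ + 1) := by
    intro t ht
    choose f hf using hcover
    have hmap : ∀ x ∈ t, f x ∈ (univ : Finset (Fin ℓ)) := fun _ _ => Finset.mem_univ _
    have hltc : (univ : Finset (Fin ℓ)).card < t.card := by
      rw [ht.2]; simp
    obtain ⟨a, ha, b, hb, hne, hfe⟩ := Finset.exists_ne_map_eq_of_card_lt_of_maps_to hltc hmap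
    exact hpart' (f a) a (hf a) b (hfe ▸ hf b) (ht.1 ha hb hne)
  -- S is a new r-clique
  have hSclique' : G'.IsNClique r S := by
    constructor
    · intro a ha b hb hne
      rw [hG'adj]
      simp only [hSdef, Finset.coe_insert, Set.mem_insert_iff, Finset.mem_coe] at ha hb
      rcases ha with rfl | rfl | ha
      · rcases hb with rfl | rfl | hb
        · exact absurd rfl hne
        · exact Or.inr (Or.inl ⟨rfl, rfl⟩)
        · exact Or.inl (hAu b hb)
      · rcases hb with rfl | rfl | hb
        · exact Or.inr (Or.inr ⟨rfl, rfl⟩)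
        · exact absurd rfl hne
        · exact Or.inl (hAv b hb)
      · rcases hb with rfl | rfl | hb
        · exact Or.inl (hAu a ha).symm
        · exact Or.inl (hAv a ha).symm
        · exact Or.inl (hT a ha b hb hne)
    · exact hScard
  have hSnot : ¬ G.IsNClique r S := by
    intro h
    exact hadj (h.1 (by simp [hSdef]) (by simp [hSdef]) huv)
  have hlt : cliqueCount G r < cliqueCount G' r := by
    apply Set.ncard_lt_ncard
    · constructor
      · intro s hs
        exact ⟨hs.1.mono hGle, hs.2⟩
      · intro h
        exact hSnot (h hSclique')
    · exact Set.toFinite _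
  exact hmaxAdd G' hGle hlt hfree'
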